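/- Let σ be any feasible point of PSOS(4) with a circular covering R of graph G (every chordless cycle of G is contained in some region), and define M_{ij} = ⟨σ_i, σ_j⟩, M_{ii} = 1. Then M is positive semidefinite and lies in the metric polytope of G: |M_e| ≤ 1 for all edges and M(F) − M(C∖F) ≥ 2 − |C| for every simple cycle C and odd F ⊆ C. -/

import Mathlib

open RealInnerProductSpace

lemma pm_mul {a b : ℝ} (ha : a = 1 ∨ a = -1) (hb : b = 1 ∨ b = -1) :
    a * b = 1 ∨ a * b = -1 := by
  rcases ha with rfl|rfl <;> rcases hb with rfl|rfl <;> norm_num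

lemma sign_prod {α : Type*} {s : Finset α} {ε : α → ℝ}
    (h : ∀ a ∈ s, ε a = 1 ∨ ε a = -1) :
    (∏ a ∈ s, ε a) = 1 ∨ (∏ a ∈ s, ε a) = -1 := by
  apply mul_self_eq_one_iff.mp
  rw [← Finset.prod_mul_distrib]
  exact Finset.prod_eq_one (fun a ha => by rcases h a ha with h'|h' <;> rw [h'] <;> norm_num)

lemma neg_one_pow_congr' {a b : ℕ} (h : a % 2 = b % 2) : ((-1:ℝ))^a = (-1)^b := by
  conv_lhs => rw [← Nat.div_add_mod a 2]
  conv_rhs => rw [← Nat.div_add_mod b 2]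
  rw [pow_add, pow_add, pow_mul, pow_mul, h]
  norm_num

lemma per_mod {α : Type*} {N : ℕ} (hN : 0 < N) (V : ℕ → α) (hper : ∀ t, V (t + N) = V t) :
    ∀ x, V x = V (x % N) := by
  intro x
  induction x using Nat.strong_induction_on with
  | _ x IH =>
    rcases lt_or_ge x N with h | h
    · rw [Nat.mod_eq_of_lt h]
    · have hx : x = (x - N) + N := by omega
      rw [Nat.mod_eq_sub_mod h, ← IH (x - N) (by omega)]
      conv_lhs => rw [hx]
      exact hper (x - N)

lemma pm_neg {a : ℝ} (ha : a = 1 ∨ a = -1) : -a = 1 ∨ -a = -1 := by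
  rcases ha with rfl|rfl <;> norm_num


lemma expand4 {E : Type*} [NormedAddCommGroup E] [InnerProductSpace ℝ E]
    (e0 a b c : E) (sa sb sc : ℝ) :
    ⟪e0 + sa•a + sb•b + sc•c, e0 + sa•a + sb•b + sc•c⟫
    = ⟪e0,e0⟫ + sa^2*⟪a,a⟫ + sb^2*⟪b,b⟫ + sc^2*⟪c,c⟫
      + 2*sa*⟪a,e0⟫ + 2*sb*⟪b,e0⟫ + 2*sc*⟪c,e0⟫
      + 2*sa*sb*⟪a,b⟫ + 2*sa*sc*⟪a,c⟫ + 2*sb*sc*⟪b,c⟫ := by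
  simp only [inner_add_left, inner_add_right, real_inner_smul_left, real_inner_smul_right,
    real_inner_comm e0 a, real_inner_comm e0 b, real_inner_comm e0 c,
    real_inner_comm b a, real_inner_comm c a, real_inner_comm c b]
  ring

lemma regionTri {n r : ℕ} {S : Set (Fin n)}
    (σ0 : EuclideanSpace ℝ (Fin r)) (σ : Fin n → EuclideanSpace ℝ (Fin r))
    (τ : Fin n → Fin n → EuclideanSpace ℝ (Fin r))
    (hσ0 : ‖σ0‖ = 1)
    (hsphere : ∀ i ∈ S, ‖σ i‖ = 1)
    (hsphere2 : ∀ i ∈ S, ∀ j ∈ S, ‖τ i j‖ = 1)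
    (hund : ∀ i ∈ S, ∀ j ∈ S, ⟪σ i, σ j⟫ = ⟪τ i j, σ0⟫)
    (htri : ∀ i ∈ S, ∀ j ∈ S, ∀ k ∈ S, ⟪τ i j, τ j k⟫ = ⟪τ i k, σ0⟫)
    (hloop : ∀ i ∈ S, ∀ j ∈ S, ∀ k ∈ S, ∀ l ∈ S, ⟪τ i j, τ k l⟫ = ⟪τ i k, τ j l⟫)
    (M : Matrix (Fin n) (Fin n) ℝ) (hM : ∀ i j, M i j = ⟪σ i, σ j⟫)
    {i j k : Fin n} (hi : i ∈ S) (hj : j ∈ S) (hk : k ∈ S)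
    {sa sb sc : ℝ} (hsa : sa = 1 ∨ sa = -1) (hsb : sb = 1 ∨ sb = -1)
    (hsc : sc = 1 ∨ sc = -1) (hprod : sa * sb * sc = 1) :
    -1 ≤ sa * M i j + sb * M j k + sc * M i k := by
  -- τ on the diagonal equals σ0
  have hdiag : ∀ p, p ∈ S → τ p p = σ0 := by
    intro p hp
    have h1 : ⟪τ p p, σ0⟫ = ‖τ p p‖ * ‖σ0‖ := by
      rw [hsphere2 p hp p hp, hσ0, ← hund p hp p hp,
        real_inner_self_eq_norm_mul_norm, hsphere p hp]
    have := inner_eq_norm_mul_iff_real.mp h1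
    rwa [hσ0, hsphere2 p hp p hp, one_smul, one_smul] at this
  have i1 : ⟪τ i j, σ0⟫ = M i j := by rw [hM, hund i hi j hj]
  have i2 : ⟪τ j k, σ0⟫ = M j k := by rw [hM, hund j hj k hk]
  have i3 : ⟪τ i k, σ0⟫ = M i k := by rw [hM, hund i hi k hk]
  have i4 : ⟪τ i j, τ j k⟫ = M i k := by rw [htri i hi j hj k hk, i3]
  have i5 : ⟪τ i j, τ i k⟫ = M j k := by
    rw [hloop i hi j hj i hi k hk, hdiag i hi, real_inner_comm, i2]
  have i6 : ⟪τ j k, τ i k⟫ = M i j := by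
    rw [hloop j hj k hk i hi k hk, hdiag k hk, hM, ← hund j hj i hi,
      real_inner_comm]
  have h0 := real_inner_self_nonneg (x := σ0 + sa•(τ i j) + sb•(τ j k) + sc•(τ i k))
  rw [expand4] at h0
  rw [i1, i2, i3, i4, i5, i6] at h0
  rw [real_inner_self_eq_norm_mul_norm, real_inner_self_eq_norm_mul_norm,
    real_inner_self_eq_norm_mul_norm, real_inner_self_eq_norm_mul_norm,
    hσ0, hsphere2 i hi j hj, hsphere2 j hj k hk, hsphere2 i hi k hk] at h0
  rcases hsa with rfl | rfl <;> rcases hsb with rfl | rfl <;> rcases hsc with rfl | rfl <;>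
    norm_num at hprod <;> norm_num at h0 ⊢
  all_goals linarith

lemma pathIneq {n : ℕ} {M : Matrix (Fin n) (Fin n) ℝ} {S : Set (Fin n)}
    (htriM : ∀ i ∈ S, ∀ j ∈ S, ∀ k ∈ S, ∀ sa sb sc : ℝ,
      (sa = 1 ∨ sa = -1) → (sb = 1 ∨ sb = -1) → (sc = 1 ∨ sc = -1) →
      sa * sb * sc = 1 → -1 ≤ sa * M i j + sb * M j k + sc * M i k) :
    ∀ m : ℕ, 1 ≤ m → ∀ (u : ℕ → Fin n) (ε : ℕ → ℝ),
      (∀ t, t ≤ m → u t ∈ S) → (∀ t, ε t = 1 ∨ ε t = -1) →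
      -((m:ℝ) - 1) ≤ (∑ t ∈ Finset.range m, ε t * M (u t) (u (t+1)))
        + (-1)^m * (∏ t ∈ Finset.range m, ε t) * M (u 0) (u m) := by
  intro m hm
  induction m, hm using Nat.le_induction with
  | base =>
    intro u ε hu hε
    simp only [Finset.sum_range_one, Finset.prod_range_one, pow_one]
    norm_num
  | succ m hm IH =>
    intro u ε hu hε
    have IH' := IH u ε (fun t ht => hu t (by omega)) hε
    set P := ∏ t ∈ Finset.range m, ε t with hPdef
    have hP : P = 1 ∨ P = -1 := sign_prod (fun a _ => hε a)
    have hA : ((-1:ℝ))^m = 1 ∨ ((-1:ℝ))^m = -1 := neg_one_pow_eq_or ℝ m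
    have hsa : -((-1:ℝ)^m * P) = 1 ∨ -((-1:ℝ)^m * P) = -1 := pm_neg (pm_mul hA hP)
    have hsc : ((-1:ℝ))^(m+1) * (P * ε m) = 1 ∨ ((-1:ℝ))^(m+1) * (P * ε m) = -1 := by
      have : ((-1:ℝ))^(m+1) = 1 ∨ ((-1:ℝ))^(m+1) = -1 := neg_one_pow_eq_or ℝ (m+1)
      exact pm_mul this (pm_mul hP (hε m))
    have hprod : (-((-1:ℝ)^m * P)) * ε m * ((-1)^(m+1) * (P * ε m)) = 1 := by
      have hAA : ((-1:ℝ))^m * (-1)^m = 1 := by rw [← mul_pow]; norm_num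
      have hP2 : P * P = 1 := by rcases hP with h|h <;> rw [h] <;> norm_num
      have he2 : ε m * ε m = 1 := by rcases hε m with h|h <;> rw [h] <;> norm_num
      rw [pow_succ]
      linear_combination (P * P * (ε m * ε m)) * hAA + (ε m * ε m) * hP2 + he2
    have key := htriM (u 0) (hu 0 (by omega)) (u m) (hu m (by omega)) (u (m+1))
      (hu (m+1) le_rfl) _ _ _ hsa (hε m) hsc hprod
    rw [Finset.sum_range_succ, Finset.prod_range_succ, ← hPdef]
    push_cast
    linarith [IH', key]

lemma regionCyc {n : ℕ} {M : Matrix (Fin n) (Fin n) ℝ} {S : Set (Fin n)}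
    (hMsymm : ∀ i j, M i j = M j i)
    (htriM : ∀ i ∈ S, ∀ j ∈ S, ∀ k ∈ S, ∀ sa sb sc : ℝ,
      (sa = 1 ∨ sa = -1) → (sb = 1 ∨ sb = -1) → (sc = 1 ∨ sc = -1) →
      sa * sb * sc = 1 → -1 ≤ sa * M i j + sb * M j k + sc * M i k) :
    ∀ N : ℕ, 2 ≤ N → ∀ (V : ℕ → Fin n) (ε : ℕ → ℝ),
      (∀ t, t ≤ N → V t ∈ S) → (∀ t, ε t = 1 ∨ ε t = -1) → V N = V 0 →
      (∏ t ∈ Finset.range N, ε t) = (-1)^(N+1) →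
      2 - (N:ℝ) ≤ ∑ t ∈ Finset.range N, ε t * M (V t) (V (t+1)) := by
  intro N hN V ε hV hε hVN hprod
  obtain ⟨m, rfl⟩ : ∃ m, N = m + 1 := ⟨N-1, by omega⟩
  have hm : 1 ≤ m := by omega
  have hpath := pathIneq htriM m hm V ε (fun t ht => hV t (by omega)) hε
  rw [Finset.sum_range_succ]
  rw [Finset.prod_range_succ] at hprod
  set P := ∏ t ∈ Finset.range m, ε t with hPdef
  have hP : P = 1 ∨ P = -1 := sign_prod (fun a _ => hε a)
  have hA : ((-1:ℝ))^m = 1 ∨ ((-1:ℝ))^m = -1 := neg_one_pow_eq_or ℝ m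
  have hpow2 : ((-1:ℝ))^(m+1+1) = (-1)^m := by rw [pow_succ, pow_succ]; ring
  rw [hpow2] at hprod
  have hcoef : (-1:ℝ)^m * P = ε m := by
    rcases hA with h1|h1 <;> rcases hP with h2|h2 <;> rcases hε m with h3|h3 <;>
      rw [h1, h2, h3] at hprod ⊢ <;> norm_num at hprod <;> norm_num
  have hlast : M (V m) (V (m+1)) = M (V 0) (V m) := by rw [hVN, hMsymm]
  rw [hlast, ← hcoef]
  push_cast
  linarith [hpath]

lemma keyCyc {n : ℕ} {G : SimpleGraph (Fin n)} {M : Matrix (Fin n) (Fin n) ℝ}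
    (hMsymm : ∀ i j, M i j = M j i)
    (hbase : ∀ N : ℕ, 3 ≤ N → ∀ (V : ℕ → Fin n) (ε : ℕ → ℝ),
      (∀ t, V (t + N) = V t) →
      (∀ t s, t < s → s < N → V t ≠ V s) →
      (∀ t, G.Adj (V t) (V (t+1))) →
      (∀ t s, t < s → s < N → t + 2 ≤ s → (t = 0 → s + 1 ≠ N) → ¬ G.Adj (V t) (V s)) →
      (∀ t, ε t = 1 ∨ ε t = -1) →
      (∏ t ∈ Finset.range N, ε t) = (-1)^(N+1) →
      2 - (N:ℝ) ≤ ∑ t ∈ Finset.range N, ε t * M (V t) (V (t+1))) :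
    ∀ N : ℕ, 3 ≤ N → ∀ (V : ℕ → Fin n) (ε : ℕ → ℝ),
      (∀ t, V (t + N) = V t) →
      (∀ t s, t < s → s < N → V t ≠ V s) →
      (∀ t, G.Adj (V t) (V (t+1))) →
      (∀ t, ε t = 1 ∨ ε t = -1) →
      (∏ t ∈ Finset.range N, ε t) = (-1)^(N+1) →
      2 - (N:ℝ) ≤ ∑ t ∈ Finset.range N, ε t * M (V t) (V (t+1)) := by
  intro N
  induction N using Nat.strong_induction_on with
  | _ N IH =>
  intro hN3 V ε hper hinj hadj hsg hprod
  by_cases hch : ∃ t s, t < s ∧ s < N ∧ t + 2 ≤ s ∧ (t = 0 → s + 1 ≠ N) ∧ G.Adj (V t) (V s)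
  case neg =>
    exact hbase N hN3 V ε hper hinj hadj
      (fun t s h1 h2 h3 h4 hAdj => hch ⟨t, s, h1, h2, h3, h4, hAdj⟩) hsg hprod
  case pos =>
  obtain ⟨t, s, hts, hsN, hts2, hnot, hchord⟩ := hch
  have h5 : 1 ≤ t ∨ s + 2 ≤ N := by
    rcases Nat.eq_zero_or_pos t with h|h
    · right; have := hnot h; omega
    · left; omega
  set N1 := s - t + 1 with hN1def
  set N2 := N - s + t + 1 with hN2def
  have hN1 : 3 ≤ N1 := by omega
  have hN1N : N1 < N := by omega
  have hN2 : 3 ≤ N2 := by omega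
  have hN2N : N2 < N := by omega
  have hsum : N1 + N2 = N + 2 := by omega
  have hNpos : 0 < N := by omega
  have hVmod : ∀ x, V x = V (x % N) := per_mod hNpos V hper
  have hinj' : ∀ a b, a < N → b < N → a ≠ b → V a ≠ V b := by
    intro a b ha hb hab
    rcases lt_or_gt_of_ne hab with h|h
    · exact hinj a b h hb
    · exact (hinj b a h ha).symm
  -- signs
  set Q1 := ∏ r ∈ Finset.range (N1 - 1), ε (t + r) with hQ1def
  have hQ1 : Q1 = 1 ∨ Q1 = -1 := sign_prod (fun a _ => hsg _)
  have hQ1sq : Q1 * Q1 = 1 := by rcases hQ1 with h|h <;> rw [h] <;> norm_num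
  set c1 := (-1:ℝ)^(N1+1) * Q1 with hc1def
  have hc1 : c1 = 1 ∨ c1 = -1 := pm_mul (neg_one_pow_eq_or ℝ _) hQ1
  -- ==== subcycle 1 ====
  set V1 : ℕ → Fin n := fun r => V (t + r % N1) with hV1def
  set ε1 : ℕ → ℝ := fun r => if r = N1 - 1 then c1 else ε (t + r) with hε1def
  have hper1 : ∀ r, V1 (r + N1) = V1 r := by
    intro r; simp only [hV1def]; rw [Nat.add_mod_right]
  have hinj1 : ∀ a b, a < b → b < N1 → V1 a ≠ V1 b := by
    intro a b hab hb
    simp only [hV1def]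
    rw [Nat.mod_eq_of_lt (by omega), Nat.mod_eq_of_lt hb]
    exact hinj (t+a) (t+b) (by omega) (by omega)
  have hadj1 : ∀ r, G.Adj (V1 r) (V1 (r+1)) := by
    intro r
    simp only [hV1def]
    have hq : r % N1 < N1 := Nat.mod_lt _ (by omega)
    have h1 : (r+1) % N1 = (r % N1 + 1) % N1 := by
      rw [Nat.add_mod r 1, Nat.mod_eq_of_lt (show 1 < N1 by omega)]
    rcases Nat.lt_or_ge (r % N1 + 1) N1 with h|h
    · rw [h1, Nat.mod_eq_of_lt h, show t + (r % N1 + 1) = (t + r % N1) + 1 from by omega]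
      exact hadj (t + r % N1)
    · have hq1 : r % N1 + 1 = N1 := by omega
      rw [h1, hq1, Nat.mod_self, show r % N1 = N1 - 1 from by omega,
        show t + (N1 - 1) = s from by omega, Nat.add_zero]
      exact hchord.symm
  have hsg1 : ∀ r, ε1 r = 1 ∨ ε1 r = -1 := by
    intro r; simp only [hε1def]; split
    · exact hc1
    · exact hsg _
  have e1 : ε1 (N1 - 1) = c1 := by rw [hε1def]; simp
  have eV1a : V1 (N1 - 1) = V s := by
    rw [hV1def]
    show V (t + (N1 - 1) % N1) = V s
    rw [Nat.mod_eq_of_lt (by omega), show t + (N1-1) = s from by omega]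
  have eV1b : V1 ((N1 - 1) + 1) = V t := by
    rw [hV1def]
    show V (t + ((N1 - 1) + 1) % N1) = V t
    rw [show (N1-1)+1 = N1 from by omega, Nat.mod_self, Nat.add_zero]
  have hQ1' : ∏ r ∈ Finset.range (N1-1), ε1 r = Q1 := by
    rw [hQ1def]
    exact Finset.prod_congr rfl (fun r hr => by
      simp only [hε1def]
      rw [if_neg (by have := Finset.mem_range.mp hr; omega)])
  have hprod1 : ∏ r ∈ Finset.range N1, ε1 r = (-1)^(N1+1) := by
    conv_lhs => rw [show N1 = (N1-1)+1 from by omega]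
    rw [Finset.prod_range_succ, hQ1', e1, hc1def]
    linear_combination ((-1:ℝ)^(N1+1)) * hQ1sq
  have IH1 := IH N1 hN1N hN1 V1 ε1 hper1 hinj1 hadj1 hsg1 hprod1
  have hS1 : ∑ r ∈ Finset.range N1, ε1 r * M (V1 r) (V1 (r+1))
      = (∑ r ∈ Finset.range (N1-1), ε (t+r) * M (V (t+r)) (V (t+r+1)))
        + c1 * M (V s) (V t) := by
    conv_lhs => rw [show N1 = (N1-1)+1 from by omega]
    rw [Finset.sum_range_succ, e1, eV1a, eV1b]
    congr 1
    apply Finset.sum_congr rfl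
    intro r hr
    have hr' : r < N1 - 1 := Finset.mem_range.mp hr
    simp only [hε1def, hV1def]
    rw [if_neg (by omega), Nat.mod_eq_of_lt (show r < N1 by omega),
      Nat.mod_eq_of_lt (show r + 1 < N1 by omega), ← Nat.add_assoc]
  -- ==== subcycle 2 ====
  set V2 : ℕ → Fin n := fun r => V (s + r % N2) with hV2def
  set ε2 : ℕ → ℝ := fun r => if r = N2 - 1 then -c1 else ε ((s + r) % N) with hε2def
  have hper2 : ∀ r, V2 (r + N2) = V2 r := by
    intro r; simp only [hV2def]; rw [Nat.add_mod_right]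
  have hinj2 : ∀ a b, a < b → b < N2 → V2 a ≠ V2 b := by
    intro a b hab hb
    simp only [hV2def]
    rw [Nat.mod_eq_of_lt (by omega), Nat.mod_eq_of_lt hb]
    rw [hVmod (s+a), hVmod (s+b)]
    apply hinj' _ _ (Nat.mod_lt _ hNpos) (Nat.mod_lt _ hNpos)
    intro heq
    have hdvd : N ∣ (s+b) - (s+a) := (Nat.modEq_iff_dvd' (by omega)).mp heq
    have := Nat.le_of_dvd (by omega) hdvd
    omega
  have hadj2 : ∀ r, G.Adj (V2 r) (V2 (r+1)) := by
    intro r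
    simp only [hV2def]
    have hq : r % N2 < N2 := Nat.mod_lt _ (by omega)
    have h1 : (r+1) % N2 = (r % N2 + 1) % N2 := by
      rw [Nat.add_mod r 1, Nat.mod_eq_of_lt (show 1 < N2 by omega)]
    rcases Nat.lt_or_ge (r % N2 + 1) N2 with h|h
    · rw [h1, Nat.mod_eq_of_lt h, show s + (r % N2 + 1) = (s + r % N2) + 1 from by omega]
      exact hadj (s + r % N2)
    · have hq1 : r % N2 + 1 = N2 := by omega
      rw [h1, hq1, Nat.mod_self, show r % N2 = N2 - 1 from by omega,
        show s + (N2 - 1) = t + N from by omega, hper t, Nat.add_zero]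
      exact hchord
  have hsg2 : ∀ r, ε2 r = 1 ∨ ε2 r = -1 := by
    intro r; simp only [hε2def]; split
    · rcases hc1 with h|h <;> rw [h] <;> norm_num
    · exact hsg _
  have e2 : ε2 (N2 - 1) = -c1 := by rw [hε2def]; simp
  have eV2a : V2 (N2 - 1) = V t := by
    rw [hV2def]
    show V (s + (N2 - 1) % N2) = V t
    rw [Nat.mod_eq_of_lt (by omega), show s + (N2-1) = t + N from by omega, hper]
  have eV2b : V2 ((N2 - 1) + 1) = V s := by
    rw [hV2def]
    show V (s + ((N2 - 1) + 1) % N2) = V s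
    rw [show (N2-1)+1 = N2 from by omega, Nat.mod_self, Nat.add_zero]
  -- products
  set Q2 := ∏ r ∈ Finset.range (N2 - 1), ε ((s + r) % N) with hQ2def
  have hQ1Ico : Q1 = ∏ x ∈ Finset.Ico t s, ε x := by
    rw [hQ1def, Finset.prod_Ico_eq_prod_range, show s - t = N1 - 1 from by omega]
  have hQ2split : Q2 = (∏ x ∈ Finset.Ico s N, ε x) * ∏ x ∈ Finset.Ico 0 t, ε x := by
    rw [hQ2def, show N2 - 1 = (N - s) + t from by omega, Finset.prod_range_add]
    congr 1
    · rw [Finset.prod_Ico_eq_prod_range]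
      apply Finset.prod_congr rfl
      intro x hx
      have : x < N - s := Finset.mem_range.mp hx
      rw [Nat.mod_eq_of_lt (by omega)]
    · rw [← Finset.range_eq_Ico]
      apply Finset.prod_congr rfl
      intro q hq
      have hq' : q < t := Finset.mem_range.mp hq
      rw [show s + ((N - s) + q) = N + q from by omega, Nat.add_mod_left,
        Nat.mod_eq_of_lt (by omega)]
  have hQtot : Q1 * Q2 = (-1:ℝ)^(N+1) := by
    rw [hQ1Ico, hQ2split, ← hprod, Finset.range_eq_Ico,
      show (∏ x ∈ Finset.Ico t s, ε x) * ((∏ x ∈ Finset.Ico s N, ε x) * ∏ x ∈ Finset.Ico 0 t, ε x)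
        = ((∏ x ∈ Finset.Ico 0 t, ε x) * (∏ x ∈ Finset.Ico t s, ε x)) * (∏ x ∈ Finset.Ico s N, ε x) from by ring,
      Finset.prod_Ico_consecutive ε (by omega) (by omega),
      Finset.prod_Ico_consecutive ε (by omega) (by omega)]
  have hQ2' : ∏ r ∈ Finset.range (N2-1), ε2 r = Q2 := by
    rw [hQ2def]
    exact Finset.prod_congr rfl (fun r hr => by
      simp only [hε2def]
      rw [if_neg (by have := Finset.mem_range.mp hr; omega)])
  have hA1sq : ((-1:ℝ))^(N1+1) * ((-1:ℝ))^(N1+1) = 1 := by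
    rw [← mul_pow]; norm_num
  have hpar : ((-1:ℝ))^(N1+1) * ((-1:ℝ))^(N2+1) = -((-1:ℝ)^(N+1)) := by
    rw [← pow_add, show (N1+1)+(N2+1) = (N+1)+3 from by omega, pow_add]
    norm_num
  have hprod2 : ∏ r ∈ Finset.range N2, ε2 r = (-1)^(N2+1) := by
    conv_lhs => rw [show N2 = (N2-1)+1 from by omega]
    rw [Finset.prod_range_succ, hQ2', e2, hc1def]
    linear_combination (-((-1:ℝ)^(N1+1))) * hQtot + (-((-1:ℝ)^(N1+1))) * hpar
      + ((-1:ℝ)^(N2+1)) * hA1sq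
  have IH2 := IH N2 hN2N hN2 V2 ε2 hper2 hinj2 hadj2 hsg2 hprod2
  have hS2 : ∑ r ∈ Finset.range N2, ε2 r * M (V2 r) (V2 (r+1))
      = (∑ r ∈ Finset.range (N2-1), ε ((s+r) % N) * M (V (s+r)) (V (s+r+1)))
        + (-c1) * M (V t) (V s) := by
    conv_lhs => rw [show N2 = (N2-1)+1 from by omega]
    rw [Finset.sum_range_succ, e2, eV2a, eV2b]
    congr 1
    apply Finset.sum_congr rfl
    intro r hr
    have hr' : r < N2 - 1 := Finset.mem_range.mp hr
    simp only [hε2def, hV2def]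
    rw [if_neg (by omega), Nat.mod_eq_of_lt (show r < N2 by omega),
      Nat.mod_eq_of_lt (show r + 1 < N2 by omega), ← Nat.add_assoc]
  -- ==== assembling ====
  set g : ℕ → ℝ := fun x => ε (x % N) * M (V x) (V (x+1)) with hgdef
  have hgper : ∀ x, g (x + N) = g x := by
    intro x
    simp only [hgdef]
    rw [Nat.add_mod_right, hper, show x + N + 1 = (x+1) + N from by omega, hper]
  have hgx : ∀ x, x < N → g x = ε x * M (V x) (V (x+1)) := by
    intro x hx; simp only [hgdef]; rw [Nat.mod_eq_of_lt hx]
  have hmain1 : ∑ r ∈ Finset.range (N1-1), ε (t+r) * M (V (t+r)) (V (t+r+1))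
      = ∑ x ∈ Finset.Ico t s, g x := by
    rw [Finset.sum_Ico_eq_sum_range, show s - t = N1 - 1 from by omega]
    apply Finset.sum_congr rfl
    intro r hr
    have hr' : r < N1 - 1 := Finset.mem_range.mp hr
    rw [hgx (t+r) (by omega)]
  have hmain2 : ∑ r ∈ Finset.range (N2-1), ε ((s+r)%N) * M (V (s+r)) (V (s+r+1))
      = (∑ x ∈ Finset.Ico s N, g x) + ∑ x ∈ Finset.Ico 0 t, g x := by
    have h1 : ∑ r ∈ Finset.range (N2-1), ε ((s+r)%N) * M (V (s+r)) (V (s+r+1))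
        = ∑ r ∈ Finset.range (N2-1), g (s+r) :=
      Finset.sum_congr rfl (fun r hr => by simp only [hgdef])
    rw [h1, show N2 - 1 = (N - s) + t from by omega, Finset.sum_range_add]
    congr 1
    · rw [Finset.sum_Ico_eq_sum_range]
    · rw [← Finset.range_eq_Ico]
      apply Finset.sum_congr rfl
      intro q hq
      rw [show s + ((N - s) + q) = q + N from by omega, hgper]
  have htot : ∑ x ∈ Finset.range N, ε x * M (V x) (V (x+1))
      = ((∑ x ∈ Finset.Ico 0 t, g x) + (∑ x ∈ Finset.Ico t s, g x)) + ∑ x ∈ Finset.Ico s N, g x := by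
    rw [Finset.sum_Ico_consecutive g (by omega) (by omega),
      Finset.sum_Ico_consecutive g (by omega) (by omega), ← Finset.range_eq_Ico]
    exact Finset.sum_congr rfl (fun x hx => (hgx x (Finset.mem_range.mp hx)).symm)
  have hcast : (N1:ℝ) + N2 = (N:ℝ) + 2 := by exact_mod_cast hsum
  rw [hS1, hmain1] at IH1
  rw [hS2, hmain2] at IH2
  have hcancel : c1 * M (V s) (V t) + (-c1) * M (V t) (V s) = 0 := by
    rw [hMsymm (V s) (V t)]; ring
  rw [htot]
  linarith [IH1, IH2, hcancel, hcast]

theorem psos4_feasible_gram_in_metric_polytope {n r : ℕ}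
    (G : SimpleGraph (Fin n)) (𝓡 : Set (Set (Fin n)))
    -- covering
    (hcovV : ∀ v : Fin n, ∃ R ∈ 𝓡, v ∈ R)
    (hcovE : ∀ i j, G.Adj i j → ∃ R ∈ 𝓡, i ∈ R ∧ j ∈ R)
    -- circular: every chordless cycle of G is contained in some region
    (hcirc : ∀ (N : ℕ), 3 ≤ N → ∀ v : Fin N → Fin n, Function.Injective v →
      (∀ k, G.Adj (v k) (v (finRotate N k))) →
      (∀ k l : Fin N, k ≠ l → l ≠ finRotate N k → k ≠ finRotate N l →
        ¬ G.Adj (v k) (v l)) →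
      ∃ R ∈ 𝓡, ∀ k, v k ∈ R)
    -- PSOS(4) feasible point
    (σ0 : EuclideanSpace ℝ (Fin r)) (σ : Fin n → EuclideanSpace ℝ (Fin r))
    (τ : Fin n → Fin n → EuclideanSpace ℝ (Fin r))
    (hσ0 : ‖σ0‖ = 1)
    (hsphere : ∀ R ∈ 𝓡, ∀ i ∈ R, ‖σ i‖ = 1)
    (hsphere2 : ∀ R ∈ 𝓡, ∀ i ∈ R, ∀ j ∈ R, ‖τ i j‖ = 1)
    (hund : ∀ R ∈ 𝓡, ∀ i ∈ R, ∀ j ∈ R, ⟪σ i, σ j⟫ = ⟪τ i j, σ0⟫)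
    (hdir : ∀ R ∈ 𝓡, ∀ i ∈ R, ∀ j ∈ R, ⟪σ i, τ i j⟫ = ⟪σ j, σ0⟫)
    (hV : ∀ R ∈ 𝓡, ∀ i ∈ R, ∀ j ∈ R, ∀ k ∈ R, ⟪σ i, τ j k⟫ = ⟪σ k, τ i j⟫)
    (htri : ∀ R ∈ 𝓡, ∀ i ∈ R, ∀ j ∈ R, ∀ k ∈ R,
      ⟪τ i j, τ j k⟫ = ⟪τ i k, σ0⟫)
    (hloop : ∀ R ∈ 𝓡, ∀ i ∈ R, ∀ j ∈ R, ∀ k ∈ R, ∀ l ∈ R,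
      ⟪τ i j, τ k l⟫ = ⟪τ i k, τ j l⟫)
    (M : Matrix (Fin n) (Fin n) ℝ) (hM : ∀ i j, M i j = ⟪σ i, σ j⟫) :
    M.PosSemidef ∧
    (∀ i j, G.Adj i j → |M i j| ≤ 1) ∧
    (∀ (N : ℕ), 3 ≤ N → ∀ v : Fin N → Fin n, Function.Injective v →
      (∀ k, G.Adj (v k) (v (finRotate N k))) →
      ∀ F : Finset (Fin N), Odd F.card →
        (∑ k ∈ F, M (v k) (v (finRotate N k)))
          - ∑ k ∈ Fᶜ, M (v k) (v (finRotate N k)) ≥ 2 - (N : ℝ)) := by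
  have hMsymm : ∀ i j, M i j = M j i := fun i j => by
    rw [hM, hM, real_inner_comm]
  refine ⟨?_, ?_, ?_⟩
  · -- positive semidefinite
    have hMA : M = (Matrix.of fun a i => σ i a : Matrix (Fin r) (Fin n) ℝ).conjTranspose
        * (Matrix.of fun a i => σ i a : Matrix (Fin r) (Fin n) ℝ) := by
      ext i j
      rw [hM]
      simp only [Matrix.mul_apply, Matrix.conjTranspose_apply, Matrix.of_apply,
        PiLp.inner_apply, RCLike.inner_apply, starRingEnd_apply, star_trivial]
      exact Finset.sum_congr rfl (fun _ _ => mul_comm _ _)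
    rw [hMA]
    exact Matrix.posSemidef_conjTranspose_mul_self _
  · -- edge bounds
    intro i j hadj
    obtain ⟨R, hR, hiR, hjR⟩ := hcovE i j hadj
    rw [hM]
    have h1 := abs_real_inner_le_norm (σ i) (σ j)
    rw [hsphere R hR i hiR, hsphere R hR j hjR] at h1
    linarith
  · -- cycle inequalities
    intro N hN3 v hvinj hvadj F hFodd
    obtain ⟨m, rfl⟩ : ∃ m, N = m + 1 := ⟨N - 1, by omega⟩
    have hm1 : 0 < m + 1 := by omega
    -- periodic ℕ-indexed versions
    set V : ℕ → Fin n := fun x => v ⟨x % (m+1), Nat.mod_lt _ hm1⟩ with hVdef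
    set ε : ℕ → ℝ :=
      fun x => if (⟨x % (m+1), Nat.mod_lt _ hm1⟩ : Fin (m+1)) ∈ F then 1 else -1 with hεdef
    have hVper : ∀ x, V (x + (m+1)) = V x := by
      intro x; simp only [hVdef, Nat.add_mod_right]
    have hVinj : ∀ a b, a < b → b < m+1 → V a ≠ V b := by
      intro a b hab hb heq
      simp only [hVdef] at heq
      have h2 : a % (m+1) = b % (m+1) := congrArg Fin.val (hvinj heq)
      rw [Nat.mod_eq_of_lt (by omega), Nat.mod_eq_of_lt hb] at h2
      omega
    have hfin1 : ∀ x : ℕ, ((⟨x % (m+1), Nat.mod_lt _ hm1⟩ : Fin (m+1)) + 1).val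
        = (x+1) % (m+1) := by
      intro x
      rw [Fin.val_add, Fin.val_one', Nat.add_mod x 1 (m+1)]
    have hVadj : ∀ x, G.Adj (V x) (V (x+1)) := by
      intro x
      have h := hvadj ⟨x % (m+1), Nat.mod_lt _ hm1⟩
      rw [finRotate_succ_apply] at h
      have he : (⟨(x+1) % (m+1), Nat.mod_lt _ hm1⟩ : Fin (m+1))
          = (⟨x % (m+1), Nat.mod_lt _ hm1⟩ : Fin (m+1)) + 1 := Fin.ext (by rw [hfin1])
      simp only [hVdef]
      rw [he]
      exact h
    have hsg : ∀ x, ε x = 1 ∨ ε x = -1 := by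
      intro x; simp only [hεdef]; split
      · left; rfl
      · right; rfl
    have hεk : ∀ k : Fin (m+1), ε k.val = (if k ∈ F then (1:ℝ) else -1) := by
      intro k
      simp only [hεdef]
      have : (⟨k.val % (m+1), Nat.mod_lt _ hm1⟩ : Fin (m+1)) = k :=
        Fin.ext (Nat.mod_eq_of_lt k.isLt)
      rw [this]
    have hprod : ∏ x ∈ Finset.range (m+1), ε x = (-1:ℝ)^(m+1+1) := by
      rw [← Fin.prod_univ_eq_prod_range ε (m+1),
        show ∏ k : Fin (m+1), ε k.val = ∏ k : Fin (m+1), (if k ∈ F then (1:ℝ) else -1)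
          from Finset.prod_congr rfl (fun k _ => hεk k),
        ← Finset.prod_mul_prod_compl F,
        Finset.prod_eq_one (fun i hi => if_pos hi), one_mul,
        show ∏ i ∈ Fᶜ, (if i ∈ F then (1:ℝ) else -1) = ∏ i ∈ Fᶜ, (-1:ℝ)
          from Finset.prod_congr rfl (fun i hi => if_neg (Finset.mem_compl.mp hi)),
        Finset.prod_const]
      apply neg_one_pow_congr'
      have hle : F.card ≤ m + 1 := by simpa using Finset.card_le_univ F
      rw [Finset.card_compl, Fintype.card_fin]
      obtain ⟨c, hc⟩ := hFodd
      omega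
    -- the base case via circular regions
    have hbase : ∀ N : ℕ, 3 ≤ N → ∀ (W : ℕ → Fin n) (δ : ℕ → ℝ),
        (∀ t, W (t + N) = W t) →
        (∀ t s, t < s → s < N → W t ≠ W s) →
        (∀ t, G.Adj (W t) (W (t+1))) →
        (∀ t s, t < s → s < N → t + 2 ≤ s → (t = 0 → s + 1 ≠ N) → ¬ G.Adj (W t) (W s)) →
        (∀ t, δ t = 1 ∨ δ t = -1) →
        (∏ t ∈ Finset.range N, δ t) = (-1)^(N+1) →
        2 - (N:ℝ) ≤ ∑ t ∈ Finset.range N, δ t * M (W t) (W (t+1)) := by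
      intro N hN3' W δ hWper hWinj hWadj hchordless hδ hδprod
      obtain ⟨p, rfl⟩ : ∃ p, N = p + 1 := ⟨N - 1, by omega⟩
      set w : Fin (p+1) → Fin n := fun k => W k.val with hwdef
      have hp1 : 0 < p + 1 := by omega
      have hWmod : ∀ x, W x = W (x % (p+1)) := per_mod hp1 W hWper
      have hfinv : ∀ k : Fin (p+1), (k + 1).val = (k.val + 1) % (p+1) := by
        intro k
        rw [Fin.val_add, Fin.val_one', Nat.add_mod k.val 1 (p+1), Nat.mod_eq_of_lt k.isLt]
      have hwinj : Function.Injective w := by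
        intro a b hab
        by_contra hne
        have hval : a.val ≠ b.val := fun h => hne (Fin.ext h)
        rcases Nat.lt_or_ge a.val b.val with h|h
        · exact hWinj a.val b.val h b.isLt hab
        · exact hWinj b.val a.val (by omega) a.isLt hab.symm
      have hwadj : ∀ k, G.Adj (w k) (w (finRotate (p+1) k)) := by
        intro k
        rw [finRotate_succ_apply]
        simp only [hwdef]
        rw [hfinv k, ← hWmod (k.val + 1)]
        exact hWadj k.val
      have hwchord : ∀ k l : Fin (p+1), k ≠ l → l ≠ finRotate (p+1) k →
          k ≠ finRotate (p+1) l → ¬ G.Adj (w k) (w l) := by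
        intro k l hkl hlk hkl2
        rw [finRotate_succ_apply] at hlk hkl2
        rcases Nat.lt_or_ge k.val l.val with h|h
        · apply hchordless k.val l.val h l.isLt
          · by_contra hc
            apply hlk
            apply Fin.ext
            have hlt := l.isLt
            have hlv : l.val = k.val + 1 := by omega
            rw [hfinv k, hlv, Nat.mod_eq_of_lt (by omega)]
          · intro hk0 hsN
            apply hkl2
            apply Fin.ext
            rw [hfinv l, hk0]
            have : l.val + 1 = p + 1 := hsN
            rw [this, Nat.mod_self]
        · have h' : l.val < k.val := by
            rcases Nat.lt_or_ge l.val k.val with h2|h2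
            · exact h2
            · exact absurd (Fin.ext (by omega) : k = l) hkl
          intro hAdj
          refine hchordless l.val k.val h' k.isLt ?_ ?_ hAdj.symm
          · by_contra hc
            apply hkl2
            apply Fin.ext
            have hlt := k.isLt
            have hkv : k.val = l.val + 1 := by omega
            rw [hfinv l, hkv, Nat.mod_eq_of_lt (by omega)]
          · intro hl0 hsN
            apply hlk
            apply Fin.ext
            rw [hfinv k, hl0]
            have : k.val + 1 = p + 1 := hsN
            rw [this, Nat.mod_self]
      obtain ⟨R, hR, hmem⟩ := hcirc (p+1) hN3' w hwinj hwadj hwchord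
      have htriM : ∀ i ∈ R, ∀ j ∈ R, ∀ k ∈ R, ∀ sa sb sc : ℝ,
          (sa = 1 ∨ sa = -1) → (sb = 1 ∨ sb = -1) → (sc = 1 ∨ sc = -1) →
          sa * sb * sc = 1 → -1 ≤ sa * M i j + sb * M j k + sc * M i k := by
        intro i hi j hj k hk sa sb sc hsa hsb hsc hpr
        exact regionTri σ0 σ τ hσ0 (hsphere R hR) (hsphere2 R hR) (hund R hR)
          (htri R hR) (hloop R hR) M hM hi hj hk hsa hsb hsc hpr
      have hW0 : W (p+1) = W 0 := by
        have := hWper 0; rwa [zero_add] at this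
      have hWR : ∀ x, x ≤ p+1 → W x ∈ R := by
        intro x hx
        rcases Nat.lt_or_ge x (p+1) with h|h
        · exact hmem ⟨x, h⟩
        · have hxe : x = p+1 := by omega
          rw [hxe, hW0]
          exact hmem ⟨0, hp1⟩
      exact regionCyc hMsymm htriM (p+1) (by omega) W δ hWR hδ hW0 hδprod
    have hkey := keyCyc hMsymm hbase (m+1) hN3 V ε hVper hVinj hVadj hsg hprod
    -- convert back to the Fin-indexed statement
    have hsum1 : ∑ x ∈ Finset.range (m+1), ε x * M (V x) (V (x+1))
        = ∑ k : Fin (m+1), (if k ∈ F then (1:ℝ) else -1) * M (v k) (v (finRotate (m+1) k)) := by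
      rw [← Fin.sum_univ_eq_sum_range (fun x => ε x * M (V x) (V (x+1))) (m+1)]
      apply Finset.sum_congr rfl
      intro k _
      rw [hεk k]
      congr 1
      rw [finRotate_succ_apply]
      simp only [hVdef]
      congr 1
      · exact congrArg v (Fin.ext (Nat.mod_eq_of_lt k.isLt))
      · apply congrArg v
        apply Fin.ext
        show (k.val + 1) % (m+1) = (k + (1 : Fin (m+1))).val
        rw [Fin.val_add, Fin.val_one', Nat.add_mod k.val 1 (m+1), Nat.mod_eq_of_lt k.isLt]
    have hsum2 : ∑ k : Fin (m+1), (if k ∈ F then (1:ℝ) else -1) * M (v k) (v (finRotate (m+1) k))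
        = (∑ k ∈ F, M (v k) (v (finRotate (m+1) k)))
          - ∑ k ∈ Fᶜ, M (v k) (v (finRotate (m+1) k)) := by
      rw [← Finset.sum_add_sum_compl F
        (fun k => (if k ∈ F then (1:ℝ) else -1) * M (v k) (v (finRotate (m+1) k)))]
      rw [show ∑ k ∈ F, (if k ∈ F then (1:ℝ) else -1) * M (v k) (v (finRotate (m+1) k))
          = ∑ k ∈ F, M (v k) (v (finRotate (m+1) k))
        from Finset.sum_congr rfl (fun k hk => by rw [if_pos hk, one_mul])]
      rw [show ∑ k ∈ Fᶜ, (if k ∈ F then (1:ℝ) else -1) * M (v k) (v (finRotate (m+1) k))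
          = -∑ k ∈ Fᶜ, M (v k) (v (finRotate (m+1) k)) from by
        rw [← Finset.sum_neg_distrib]
        exact Finset.sum_congr rfl (fun k hk => by
          rw [if_neg (Finset.mem_compl.mp hk), neg_one_mul])]
      ring
    rw [ge_iff_le, ← hsum2, ← hsum1]
    exact_mod_cast hkey
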